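/- Let f(x) = a x^2 + b x + c be primitive and p a prime with p | a. If p | b, then d_{p^e} = ∞ (no solutions of f(x) ≡ 0 mod p^e) for every e ≥ 1; if p ∤ b, then d_{p^e} = p^e for all e ≥ 1. -/

import Mathlib

lemma exists_root (a b c : ℤ) (p : ℕ) (hp : p.Prime) (hpa : (p:ℤ) ∣ a)
    (hpb : ¬ (p:ℤ) ∣ b) (e : ℕ) : ∃ x : ℤ, (p:ℤ)^e ∣ a*x^2+b*x+c := by
  haveI := Fact.mk hp
  induction e with
  | zero => exact ⟨0, by simp⟩
  | succ k ih =>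
    obtain ⟨x, q, hq⟩ := ih
    have hu : ¬ (p:ℤ) ∣ (2*a*x+b) := by
      intro h
      apply hpb
      have h2 : (p:ℤ) ∣ 2*a*x := by
        obtain ⟨m, hm⟩ := hpa
        exact ⟨2*m*x, by rw [hm]; ring⟩
      have := dvd_sub h h2
      simpa using this
    set u : ZMod p := ((2*a*x+b : ℤ) : ZMod p) with hudef
    have hu0 : u ≠ 0 := by
      rw [hudef, Ne, ZMod.intCast_zmod_eq_zero_iff_dvd]
      exact hu
    set t : ℤ := ((-(q : ZMod p) * u⁻¹).val : ℤ) with htdef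
    have ht : (p:ℤ) ∣ q + t*(2*a*x+b) := by
      rw [← ZMod.intCast_zmod_eq_zero_iff_dvd]
      push_cast
      rw [htdef]
      push_cast [ZMod.intCast_cast, ZMod.natCast_val, ZMod.cast_id]
      rw [show ((2:ZMod p)*(a:ZMod p)*(x:ZMod p)+(b:ZMod p)) = u from by rw [hudef]; push_cast; ring]
      field_simp
      ring
    refine ⟨x + t*(p:ℤ)^k, ?_⟩
    obtain ⟨s, hs⟩ := ht
    obtain ⟨m, hm⟩ := hpa
    refine ⟨s + m*t^2*(p:ℤ)^k, ?_⟩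
    linear_combination hq + (p:ℤ)^k * hs + t^2*(p:ℤ)^k*(p:ℤ)^k * hm

lemma unique_root (a b c : ℤ) (p : ℕ) (hp : p.Prime) (hpa : (p:ℤ) ∣ a)
    (hpb : ¬ (p:ℤ) ∣ b) (e : ℕ) {x y : ℤ} (hx : (p:ℤ)^e ∣ a*x^2+b*x+c)
    (hy : (p:ℤ)^e ∣ a*y^2+b*y+c) : (p:ℤ)^e ∣ x - y := by
  have hpz : Prime (p:ℤ) := Nat.prime_iff_prime_int.mp hp
  have hd : (p:ℤ)^e ∣ (x-y) * (a*(x+y)+b) := by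
    have : (x-y) * (a*(x+y)+b) = (a*x^2+b*x+c) - (a*y^2+b*y+c) := by ring
    rw [this]; exact dvd_sub hx hy
  refine hpz.pow_dvd_of_dvd_mul_right e ?_ hd
  intro h
  apply hpb
  have h2 : (p:ℤ) ∣ a*(x+y) := hpa.mul_right _
  simpa using dvd_sub h h2


/-- The set of solutions of `f(x) ≡ 0 (mod pᵉ)` in `[1, pᵉ]`. -/
def solSet (f : ℤ → ℤ) (p e : ℕ) : Set ℤ :=
  {x | 1 ≤ x ∧ x ≤ (p : ℤ)^e ∧ (p : ℤ)^e ∣ f x}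

/-- The representative `⟨y⟩ₘ ∈ [1, m]` of `y` modulo `m`. -/
def rep (m y : ℤ) : ℤ := if y % m = 0 then m else y % m

/-- The distance between two roots modulo `m`:
`min(⟨x₁ - x₂⟩ₘ, ⟨x₂ - x₁⟩ₘ)` (equal to `m` when `x₁ = x₂`). -/
def pairDist (m x₁ x₂ : ℤ) : ℤ := min (rep m (x₁ - x₂)) (rep m (x₂ - x₁))

/-- The minimal distance `d_{pᵉ}` among the roots of `f(x) ≡ 0 (mod pᵉ)`:
`1` for `e = 0`, the minimum of all pairwise distances when the solution set
is nonempty, and `∞` (the infimum of the empty set) when it is empty. -/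
noncomputable def minDist (f : ℤ → ℤ) (p e : ℕ) : ℕ∞ :=
  if e = 0 then 1
  else sInf {d : ℕ∞ | ∃ x₁ ∈ solSet f p e, ∃ x₂ ∈ solSet f p e,
    d = ((pairDist ((p : ℤ)^e) x₁ x₂).toNat : ℕ∞)}

/-- For primitive `f(x) = ax² + bx + c` and a prime `p ∣ a`: if `p ∣ b` then
`d_{pᵉ} = ∞` for all `e ≥ 1`; if `p ∤ b` then `d_{pᵉ} = pᵉ` for all `e ≥ 1`. -/
theorem minDist_p_dvd_a (a b c : ℤ) (hprim : Int.gcd a (Int.gcd b c) = 1)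
    (p : ℕ) (hp : p.Prime) (hpa : (p : ℤ) ∣ a) :
    (((p : ℤ) ∣ b) → ∀ e : ℕ, 1 ≤ e →
      minDist (fun x => a*x^2 + b*x + c) p e = ⊤) ∧
    ((¬ (p : ℤ) ∣ b) → ∀ e : ℕ, 1 ≤ e →
      minDist (fun x => a*x^2 + b*x + c) p e = ((p^e : ℕ) : ℕ∞)) := by
  have hp1 : (1:ℤ) < (p:ℤ) := by exact_mod_cast hp.one_lt
  constructor
  · intro hpb e he
    have hsol : solSet (fun x => a*x^2 + b*x + c) p e = ∅ := by
      ext x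
      simp only [solSet, Set.mem_setOf_eq, Set.mem_empty_iff_false, iff_false, not_and]
      intro _ _ hdvd
      have hpf : (p:ℤ) ∣ a*x^2 + b*x + c :=
        dvd_trans (dvd_pow_self (p:ℤ) (by omega)) hdvd
      have hpc : (p:ℤ) ∣ c := by
        have h1 := dvd_sub (dvd_sub hpf ((hpa.mul_right (x^2)))) (hpb.mul_right x)
        have heq : (a*x^2 + b*x + c) - a*x^2 - b*x = c := by ring
        rwa [heq] at h1
      have hg : (p:ℤ) ∣ ((Int.gcd a (Int.gcd b c) : ℕ) : ℤ) :=
        Int.dvd_coe_gcd hpa (Int.dvd_coe_gcd hpb hpc)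
      rw [hprim] at hg
      exact absurd (Int.le_of_dvd one_pos hg) (by omega)
    have hset : {d : ℕ∞ | ∃ x₁ ∈ solSet (fun x => a*x^2 + b*x + c) p e,
        ∃ x₂ ∈ solSet (fun x => a*x^2 + b*x + c) p e,
        d = ((pairDist ((p : ℤ)^e) x₁ x₂).toNat : ℕ∞)} = ∅ := by
      ext d
      simp [hsol]
    rw [minDist, if_neg (by omega), hset, sInf_empty]
  · intro hpb e he
    obtain ⟨x, hx⟩ := exists_root a b c p hp hpa hpb e
    set m : ℤ := (p:ℤ)^e with hmdef
    have hm0 : 0 < m := pow_pos (by omega) e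
    set x₀ : ℤ := rep m x with hx₀def
    have hcong : m ∣ x₀ - x := by
      rw [hx₀def, rep]
      split_ifs with h
      · have : m ∣ x := Int.dvd_of_emod_eq_zero h
        exact dvd_sub dvd_rfl this
      · refine ⟨-(x/m), ?_⟩
        rw [Int.emod_def]
        ring
    have hdvd₀ : m ∣ a*x₀^2 + b*x₀ + c := by
      have hd : m ∣ (a*x₀^2 + b*x₀ + c) - (a*x^2 + b*x + c) := by
        have heq : (a*x₀^2 + b*x₀ + c) - (a*x^2 + b*x + c)
            = (x₀ - x) * (a*(x₀+x) + b) := by ring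
        rw [heq]
        exact hcong.mul_right _
      have h2 := dvd_add hd hx
      have heq2 : (a*x₀^2 + b*x₀ + c) - (a*x^2 + b*x + c) + (a*x^2 + b*x + c)
          = a*x₀^2 + b*x₀ + c := by ring
      rwa [heq2] at h2
    have hsol₀ : x₀ ∈ solSet (fun x => a*x^2 + b*x + c) p e := by
      refine ⟨?_, ?_, hdvd₀⟩
      · rw [hx₀def, rep]
        split_ifs with h
        · omega
        · have := Int.emod_nonneg x (by omega : m ≠ 0)
          omega
      · rw [hx₀def, rep, ← hmdef]
        split_ifs with h
        · omega
        · have := Int.emod_lt_of_pos x hm0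
          omega
    have huniq : ∀ y ∈ solSet (fun x => a*x^2 + b*x + c) p e, y = x₀ := by
      rintro y ⟨hy1, hy2, hy3⟩
      have hd : m ∣ y - x₀ := unique_root a b c p hp hpa hpb e hy3 hdvd₀
      have hb1 := hsol₀.1
      have hb2 := hsol₀.2.1
      rw [← hmdef] at hy2 hb2
      have habs : |y - x₀| < m := abs_lt.mpr ⟨by omega, by omega⟩
      have : y - x₀ = 0 := Int.eq_zero_of_abs_lt_dvd hd habs
      omega
    have hpd : pairDist m x₀ x₀ = m := by
      simp [pairDist, rep, Int.emod_emod_of_dvd]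
    have hset : {d : ℕ∞ | ∃ x₁ ∈ solSet (fun x => a*x^2 + b*x + c) p e,
        ∃ x₂ ∈ solSet (fun x => a*x^2 + b*x + c) p e,
        d = ((pairDist ((p : ℤ)^e) x₁ x₂).toNat : ℕ∞)} = {((m.toNat : ℕ) : ℕ∞)} := by
      ext d
      simp only [Set.mem_setOf_eq, Set.mem_singleton_iff]
      constructor
      · rintro ⟨x₁, h₁, x₂, h₂, rfl⟩
        rw [huniq x₁ h₁, huniq x₂ h₂, ← hmdef, hpd]
      · rintro rfl
        exact ⟨x₀, hsol₀, x₀, hsol₀, by rw [← hmdef, hpd]⟩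
    rw [minDist, if_neg (by omega), hset, sInf_singleton]
    congr 1
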